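/- arXiv:0710.2755 — 2 statements merged into one kernel-verified Lean document; each statement's English description precedes it below -/
import Mathlib

section
/- For each α with 0 < α < 1, the numbers p_k = (1+α)·Γ(k-1-α)/(Γ(1-α)·Γ(k+1)) for k = 2, 3, ... are nonnegative and sum to 1, and they satisfy Σ_{k≥2} p_k s^k = s + (1/α)(1-s)((1-s)^α - 1) for 0 ≤ s ≤ 1. -/
open Real Finset Filter Set

section BinomialAux

noncomputable def bc (β : ℝ) (k : ℕ) : ℝ :=
  (∏ j ∈ Finset.range k, ((j : ℝ) - β)) / (Nat.factorial k : ℝ)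

lemma bc_zero (β : ℝ) : bc β 0 = 1 := by simp [bc]

lemma bc_one (β : ℝ) : bc β 1 = -β := by simp [bc]

lemma bc_succ (β : ℝ) (k : ℕ) :
    bc β (k + 1) = (((k : ℝ) - β) / ((k : ℝ) + 1)) * bc β k := by
  have hk : (Nat.factorial k : ℝ) ≠ 0 := by positivity
  have hk1 : ((k : ℝ) + 1) ≠ 0 := by positivity
  simp only [bc, Finset.prod_range_succ, Nat.factorial_succ]
  push_cast
  field_simp

lemma bc_rec (β : ℝ) (k : ℕ) :
    ((k : ℝ) + 1) * bc β (k + 1) = ((k : ℝ) - β) * bc β k := by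
  rw [bc_succ]
  have hk1 : ((k : ℝ) + 1) ≠ 0 := by positivity
  field_simp

lemma bc_shift (β : ℝ) (n : ℕ) :
    ((n : ℝ) + 1) * bc β (n + 1) = -β * bc (β - 1) n := by
  have hk : (Nat.factorial n : ℝ) ≠ 0 := by positivity
  have hk1 : ((n : ℝ) + 1) ≠ 0 := by positivity
  simp only [bc, Finset.prod_range_succ', Nat.factorial_succ]
  push_cast
  have : (∏ j ∈ Finset.range n, ((j : ℝ) + 1 - β)) =
      ∏ j ∈ Finset.range n, ((j : ℝ) - (β - 1)) := by
    apply Finset.prod_congr rfl; intro j _; ring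
  rw [this]
  field_simp
  ring

lemma bc_partial (β : ℝ) (n : ℕ) :
    ∑ k ∈ Finset.range (n + 1), bc β k = bc (β - 1) n := by
  induction n with
  | zero => simp [bc]
  | succ n ih =>
      rw [Finset.sum_range_succ, ih]
      have h1 := bc_shift β n
      have h2 := bc_rec (β - 1) n
      have hn : ((n : ℝ) + 1) ≠ 0 := by positivity
      have : ((n : ℝ) + 1) * (bc (β - 1) n + bc β (n + 1)) =
          ((n : ℝ) + 1) * bc (β - 1) (n + 1) := by
        rw [mul_add, h1, h2]; ring
      exact mul_left_cancel₀ hn this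

lemma bc_nonneg {β : ℝ} (hβ1 : 1 ≤ β) (hβ2 : β ≤ 2) (m : ℕ) :
    0 ≤ bc β (m + 2) := by
  induction m with
  | zero =>
      simp [bc, Finset.prod_range_succ]
      nlinarith
  | succ m ih =>
      have h : bc β (m + 3) = (((m : ℝ) + 2 - β) / ((m : ℝ) + 2 + 1)) * bc β (m + 2) := by
        have := bc_succ β (m + 2)
        push_cast at this ⊢
        convert this using 3 <;> ring
      rw [h]
      apply mul_nonneg (div_nonneg (by linarith) (by positivity)) ih

lemma bc_abs_le {β : ℝ} (hβ0 : 0 < β) (hβ2 : β ≤ 2) (k : ℕ) :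
    |bc β k| ≤ (k : ℝ) + 1 := by
  induction k with
  | zero => simp [bc]
  | succ k ih =>
      push_cast
      rw [bc_succ, abs_mul, abs_div]
      have h1 : |(k : ℝ) - β| ≤ (k : ℝ) + 2 := by
        rw [abs_le]; constructor <;> linarith
      have h2 : |(k : ℝ) + 1| = (k : ℝ) + 1 := abs_of_pos (by positivity)
      rw [h2]
      calc |(k : ℝ) - β| / ((k : ℝ) + 1) * |bc β k|
          ≤ (((k : ℝ) + 2) / ((k : ℝ) + 1)) * ((k : ℝ) + 1) := by
            apply mul_le_mul (by apply div_le_div_of_nonneg_right h1 (by positivity) |>.trans_eq rfl) ih (abs_nonneg _) (by positivity)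
        _ = (k : ℝ) + 1 + 1 := by field_simp; ring

lemma bc_alpha_abs {α : ℝ} (hα0 : 0 < α) (hα1 : α < 1) (n : ℕ) :
    |bc α (n + 1)| ≤ α / ((n : ℝ) + 1) := by
  induction n with
  | zero =>
      simp [bc, abs_of_pos hα0]
  | succ n ih =>
      have h : bc α (n + 2) = (((n : ℝ) + 1 - α) / ((n : ℝ) + 1 + 1)) * bc α (n + 1) := by
        have := bc_succ α (n + 1)
        push_cast at this ⊢
        convert this using 3 <;> ring
      push_cast
      rw [h, abs_mul, abs_div]
      have h1 : |(n : ℝ) + 1 - α| ≤ (n : ℝ) + 1 := by rw [abs_le]; constructor <;> linarith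
      have h2 : |(n : ℝ) + 1 + 1| = (n : ℝ) + 2 := by rw [abs_of_pos] <;> [ring; positivity]
      rw [h2]
      calc |(n : ℝ) + 1 - α| / ((n : ℝ) + 2) * |bc α (n + 1)|
          ≤ (((n : ℝ) + 1) / ((n : ℝ) + 2)) * (α / ((n : ℝ) + 1)) := by
            apply mul_le_mul (div_le_div_of_nonneg_right h1 (by positivity) |>.trans_eq rfl) ih (abs_nonneg _) (by positivity)
        _ = α / ((n : ℝ) + 1 + 1) := by field_simp; ring

lemma Gprod {α : ℝ} (hα1 : α < 1) (m : ℕ) :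
    Real.Gamma ((m : ℝ) + 1 - α) =
      Real.Gamma (1 - α) * ∏ j ∈ Finset.range m, ((j : ℝ) + 1 - α) := by
  induction m with
  | zero => simp
  | succ m ih =>
      have h : ((m : ℕ) + 1 : ℝ) + 1 - α = ((m : ℝ) + 1 - α) + 1 := by push_cast; ring
      have hne : (m : ℝ) + 1 - α ≠ 0 := by
        have : (0:ℝ) < (m : ℝ) + 1 - α := by
          have : (0:ℝ) ≤ (m:ℝ) := Nat.cast_nonneg m
          linarith
        linarith
      push_cast
      rw [h, Real.Gamma_add_one hne, ih, Finset.prod_range_succ]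
      push_cast
      ring

lemma bc_eval {α : ℝ} (m : ℕ) :
    bc (1 + α) (m + 2) =
      (1 + α) * α * (∏ j ∈ Finset.range m, ((j : ℝ) + 1 - α)) / (Nat.factorial (m + 2) : ℝ) := by
  unfold bc
  congr 1
  rw [Finset.prod_range_succ', Finset.prod_range_succ']
  push_cast
  have : (∏ j ∈ Finset.range m, ((j : ℝ) + 1 + 1 - (1 + α))) =
      ∏ j ∈ Finset.range m, ((j : ℝ) + 1 - α) := by
    apply Finset.prod_congr rfl; intro j _; ring
  rw [this]
  ring

lemma summable_poly2_geom {r : ℝ} (hr : |r| < 1) :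
    Summable (fun k : ℕ => ((k : ℝ) + 1) * ((k : ℝ) + 2) * |r| ^ k) := by
  have hr' : ‖|r|‖ < 1 := by rwa [Real.norm_eq_abs, abs_abs]
  have h0 : Summable (fun n : ℕ => |r| ^ n) :=
    summable_geometric_of_lt_one (abs_nonneg r) hr
  have h1 : Summable (fun n : ℕ => (n : ℝ) * |r| ^ n) := by
    simpa using summable_pow_mul_geometric_of_norm_lt_one 1 hr'
  have h2 : Summable (fun n : ℕ => (n : ℝ) ^ 2 * |r| ^ n) :=
    summable_pow_mul_geometric_of_norm_lt_one 2 hr'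
  have := (h2.add ((h1.mul_left 3).add (h0.mul_left 2)))
  apply this.congr
  intro n
  ring

lemma summable_poly1_geom {r : ℝ} (hr : |r| < 1) :
    Summable (fun k : ℕ => ((k : ℝ) + 1) * |r| ^ k) := by
  have h0 : Summable (fun n : ℕ => |r| ^ n) :=
    summable_geometric_of_lt_one (abs_nonneg r) hr
  have h1 : Summable (fun n : ℕ => (n : ℝ) * |r| ^ n) := by
    simpa using summable_pow_mul_geometric_of_norm_lt_one 1
      (by rwa [Real.norm_eq_abs, abs_abs])
  exact (h1.add h0).congr (fun n => by ring)

section key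
variable {β : ℝ} (hβ1 : 1 < β) (hβ2 : β < 2)

include hβ1 hβ2 in
lemma summable_S1 {y : ℝ} (hy : |y| < 1) :
    Summable (fun k : ℕ => bc β k * y ^ k) := by
  apply Summable.of_norm_bounded (summable_poly1_geom hy)
  intro k
  rw [Real.norm_eq_abs, abs_mul, abs_pow]
  exact mul_le_mul_of_nonneg_right (bc_abs_le (by linarith) (by linarith) k)
    (pow_nonneg (abs_nonneg y) k)

include hβ1 hβ2 in
lemma summable_S2 {y : ℝ} (hy : |y| < 1) :
    Summable (fun k : ℕ => ((k : ℝ) + 1) * bc β (k + 1) * y ^ k) := by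
  apply Summable.of_norm_bounded (summable_poly2_geom hy)
  intro k
  rw [Real.norm_eq_abs, abs_mul, abs_mul, abs_pow]
  have h1 : |((k : ℝ) + 1)| = (k : ℝ) + 1 := abs_of_pos (by positivity)
  rw [h1]
  have h2 : |bc β (k + 1)| ≤ (k : ℝ) + 2 := by
    have := bc_abs_le (β := β) (by linarith) (by linarith) (k + 1)
    push_cast at this; linarith
  calc ((k : ℝ) + 1) * |bc β (k + 1)| * |y| ^ k
      ≤ ((k : ℝ) + 1) * ((k : ℝ) + 2) * |y| ^ k := by
        apply mul_le_mul_of_nonneg_right _ (pow_nonneg (abs_nonneg y) k)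
        exact mul_le_mul_of_nonneg_left h2 (by positivity)

include hβ1 hβ2 in
lemma summable_S3 {y : ℝ} (hy : |y| < 1) :
    Summable (fun k : ℕ => (k : ℝ) * bc β k * y ^ k) := by
  apply Summable.of_norm_bounded (summable_poly2_geom hy)
  intro k
  rw [Real.norm_eq_abs, abs_mul, abs_mul, abs_pow]
  have h1 : |(k : ℝ)| = (k : ℝ) := abs_of_nonneg (Nat.cast_nonneg k)
  rw [h1]
  have h2 := bc_abs_le (β := β) (by linarith) (by linarith) k
  calc (k : ℝ) * |bc β k| * |y| ^ k
      ≤ ((k : ℝ) + 1) * ((k : ℝ) + 1) * |y| ^ k := by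
        apply mul_le_mul_of_nonneg_right _ (pow_nonneg (abs_nonneg y) k)
        exact mul_le_mul (by linarith) h2 (abs_nonneg _) (by positivity)
    _ ≤ ((k : ℝ) + 1) * ((k : ℝ) + 2) * |y| ^ k := by
        apply mul_le_mul_of_nonneg_right _ (pow_nonneg (abs_nonneg y) k)
        have : (0:ℝ) ≤ (k:ℝ) + 1 := by positivity
        nlinarith

end key

lemma tsum_binomial {β : ℝ} (hβ1 : 1 < β) (hβ2 : β < 2) {s : ℝ}
    (h0 : 0 ≤ s) (h1 : s < 1) :
    ∑' k : ℕ, bc β k * s ^ k = (1 - s) ^ β := by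
  set r : ℝ := (1 + s) / 2 with hr_def
  have hsr : s < r := by rw [hr_def]; linarith
  have hr1 : r < 1 := by rw [hr_def]; linarith
  have hr0 : 0 < r := by rw [hr_def]; linarith
  have habs : ∀ y : ℝ, y ∈ Set.Ioo (-r) r → |y| < 1 := by
    intro y hy; rw [abs_lt]; exact ⟨by linarith [hy.1], by linarith [hy.2]⟩
  set G : ℝ → ℝ := fun y => ∑' k : ℕ, bc β k * y ^ k with hG_def
  set D : ℝ → ℝ := fun y => ∑' k : ℕ, ((k : ℝ) + 1) * bc β (k + 1) * y ^ k with hD_def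
  -- derivative of G
  have hu : Summable (fun n : ℕ => (n : ℝ) * ((n : ℝ) + 1) * r ^ (n - 1)) := by
    rw [← summable_nat_add_iff 1]
    have := summable_poly2_geom (r := r) (by rwa [abs_of_pos hr0])
    rw [abs_of_pos hr0] at this
    apply this.congr
    intro n
    simp only [Nat.add_sub_cancel]
    push_cast
    ring
  have hderivG : ∀ y ∈ Set.Ioo (-r) r, HasDerivAt G (D y) y := by
    intro y hy
    have key := hasDerivAt_tsum_of_isPreconnected hu isOpen_Ioo
      (isPreconnected_Ioo (a := -r) (b := r))
      (g := fun n z => bc β n * z ^ n)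
      (g' := fun n z => bc β n * ((n : ℝ) * z ^ (n - 1)))
      (fun n z _ => (hasDerivAt_pow n z).const_mul (bc β n))
      ?_ (Set.mem_Ioo.mpr ⟨by linarith, by linarith⟩)
      (summable_S1 hβ1 hβ2 (y := 0) (by simp)) hy
    · have hfy : Summable (fun n : ℕ => bc β n * ((n : ℝ) * y ^ (n - 1))) := by
        apply Summable.of_norm_bounded hu
        intro n
        rw [Real.norm_eq_abs, abs_mul, abs_mul, abs_pow,
          abs_of_nonneg (Nat.cast_nonneg n : (0:ℝ) ≤ n)]
        have hb := bc_abs_le (β := β) (by linarith) (by linarith) n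
        have hyr : |y| ^ (n-1) ≤ r ^ (n-1) :=
          pow_le_pow_left₀ (abs_nonneg y) (le_of_lt (abs_lt.mpr ⟨by linarith [hy.1], by linarith [hy.2]⟩)) _
        calc |bc β n| * ((n:ℝ) * |y| ^ (n-1))
            ≤ ((n:ℝ) + 1) * ((n:ℝ) * r ^ (n-1)) := by
              apply mul_le_mul hb _ (by positivity) (by positivity)
              exact mul_le_mul_of_nonneg_left hyr (Nat.cast_nonneg n)
          _ = (n:ℝ) * ((n:ℝ) + 1) * r ^ (n-1) := by ring
      have heq : (∑' n : ℕ, bc β n * ((n : ℝ) * y ^ (n - 1))) = D y := by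
        have h01 := Summable.sum_add_tsum_nat_add (f := fun n : ℕ => bc β n * ((n : ℝ) * y ^ (n - 1))) 1 hfy
        rw [hD_def]
        simp only [Finset.sum_range_one, Nat.cast_zero, zero_mul, mul_zero, zero_add] at h01
        rw [← h01]
        apply tsum_congr
        intro k
        simp only [Nat.add_sub_cancel]
        push_cast
        ring
      rw [← heq]
      exact key
    · intro n z hz
      rw [Real.norm_eq_abs, abs_mul, abs_mul, abs_pow,
        abs_of_nonneg (Nat.cast_nonneg n : (0:ℝ) ≤ n)]
      have hb := bc_abs_le (β := β) (by linarith) (by linarith) n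
      have hyr : |z| ^ (n-1) ≤ r ^ (n-1) :=
        pow_le_pow_left₀ (abs_nonneg z) (le_of_lt (abs_lt.mpr ⟨by linarith [hz.1], by linarith [hz.2]⟩)) _
      calc |bc β n| * ((n:ℝ) * |z| ^ (n-1))
          ≤ ((n:ℝ) + 1) * ((n:ℝ) * r ^ (n-1)) := by
            apply mul_le_mul hb _ (by positivity) (by positivity)
            exact mul_le_mul_of_nonneg_left hyr (Nat.cast_nonneg n)
        _ = (n:ℝ) * ((n:ℝ) + 1) * r ^ (n-1) := by ring
  -- the ODE
  have hODE : ∀ y ∈ Set.Ioo (-r) r, (1 - y) * D y + β * G y = 0 := by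
    intro y hy
    have hyabs := habs y hy
    have C := summable_S1 hβ1 hβ2 hyabs
    have A := summable_S2 hβ1 hβ2 hyabs
    have B := summable_S3 hβ1 hβ2 hyabs
    have hstep1 : y * D y = ∑' k : ℕ, (k : ℝ) * bc β k * y ^ k := by
      rw [hD_def]
      simp only
      rw [← tsum_mul_left]
      have h01 := Summable.sum_add_tsum_nat_add (f := fun k : ℕ => (k : ℝ) * bc β k * y ^ k) 1 B
      simp only [Finset.sum_range_one, Nat.cast_zero, zero_mul, zero_add] at h01
      rw [← h01]
      apply tsum_congr
      intro k
      push_cast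
      try ring
    have hstep2 : D y = ∑' k : ℕ, ((k : ℝ) - β) * bc β k * y ^ k := by
      apply tsum_congr
      intro k
      rw [show ((k : ℝ) + 1) * bc β (k + 1) * y ^ k
          = (((k : ℝ) + 1) * bc β (k + 1)) * y ^ k by ring, bc_rec]
    have hsub : Summable (fun k : ℕ => ((k : ℝ) - β) * bc β k * y ^ k) :=
      (B.sub (C.mul_left β)).congr (fun k => by ring)
    have hβG : β * G y = ∑' k : ℕ, β * (bc β k * y ^ k) := by
      rw [hG_def]; exact (tsum_mul_left).symm
    rw [show (1 - y) * D y + β * G y = D y - y * D y + β * G y by ring,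
      hstep1, hstep2, hβG,
      ← Summable.tsum_sub hsub B, ← Summable.tsum_add ((hsub).sub B) (C.mul_left β)]
    rw [show (0:ℝ) = ∑' _ : ℕ, (0:ℝ) by simp]
    apply tsum_congr
    intro k
    ring
  -- H constant
  set H : ℝ → ℝ := fun y => G y * (1 - y) ^ (-β) with hH_def
  have hderivH : ∀ y ∈ Set.Ioo (-r) r, HasDerivAt H 0 y := by
    intro y hy
    have h1y : (0:ℝ) < 1 - y := by have := hy.2; simp at this ⊢; linarith
    have hinner : HasDerivAt (fun z : ℝ => 1 - z) (-1) y := by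
      simpa using (hasDerivAt_id y).const_sub 1
    have hrpow : HasDerivAt (fun z : ℝ => (1 - z) ^ (-β))
        (-1 * (-β) * (1 - y) ^ (-β - 1)) y :=
      hinner.rpow_const (Or.inl (ne_of_gt h1y))
    have : HasDerivAt (fun z => G z * (1 - z) ^ (-β))
        (D y * (1 - y) ^ (-β) + G y * (-1 * (-β) * (1 - y) ^ (-β - 1))) y :=
      (hderivG y hy).mul hrpow
    convert this using 1
    have hsplit := Real.rpow_add h1y (-β - 1) 1
    rw [Real.rpow_one, show -β - 1 + 1 = -β by ring] at hsplit
    rw [hsplit]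
    have h0 := hODE y hy
    nlinarith [h0, Real.rpow_pos_of_pos h1y (-β - 1)]
  have hsub : Set.Icc (0:ℝ) s ⊆ Set.Ioo (-r) r := by
    intro x hx
    exact ⟨by linarith [hx.1], by linarith [hx.2]⟩
  have hconst := constant_of_has_deriv_right_zero
    (f := H) (a := 0) (b := s)
    (fun x hx => ((hderivH x (hsub hx)).continuousAt).continuousWithinAt)
    (fun x hx => ((hderivH x (hsub (Set.mem_Icc.mpr ⟨hx.1, le_of_lt (lt_of_lt_of_le hx.2 le_rfl)⟩))).hasDerivWithinAt))
    s (Set.mem_Icc.mpr ⟨h0, le_rfl⟩)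
  have hG0 : G 0 = 1 := by
    rw [hG_def]
    simp only
    rw [tsum_eq_single 0 (fun k hk => by simp [zero_pow hk])]
    simp [bc_zero]
  have hH0 : H 0 = 1 := by
    rw [hH_def]; simp only
    rw [hG0]
    simp
  rw [hH0] at hconst
  -- conclude
  have h1s : (0:ℝ) < 1 - s := by linarith
  have : G s * (1 - s) ^ (-β) = 1 := hconst
  have hGs : G s = (1 - s) ^ β := by
    have hne : (1 - s) ^ (-β) ≠ 0 := ne_of_gt (Real.rpow_pos_of_pos h1s _)
    have := congrArg (fun z => z * (1 - s) ^ β) this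
    simp only [one_mul] at this
    rw [← this]
    rw [mul_assoc, ← Real.rpow_add h1s]
    simp
  exact hGs

end BinomialAux

/-- For `0 < α < 1` the numbers `p_k = (1+α)Γ(k-1-α)/(Γ(1-α)Γ(k+1))`, `k ≥ 2`, are
nonnegative, sum to one, and have generating function `s + (1/α)(1-s)((1-s)^α - 1)`. -/
theorem stmt2 (α : ℝ) (hα0 : 0 < α) (hα1 : α < 1)
    (p : ℕ → ℝ)
    (hp : ∀ k : ℕ, 2 ≤ k →
      p k = (1 + α) * Real.Gamma ((k : ℝ) - 1 - α) /
        (Real.Gamma (1 - α) * Real.Gamma ((k : ℝ) + 1))) :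
    (∀ k : ℕ, 2 ≤ k → 0 ≤ p k) ∧
    (∑' k : ℕ, p (k + 2) = 1) ∧
    ∀ s : ℝ, 0 ≤ s → s ≤ 1 →
      ∑' k : ℕ, p (k + 2) * s ^ (k + 2)
        = s + (1 / α) * (1 - s) * ((1 - s) ^ α - 1) := by
  have hΓpos : 0 < Real.Gamma (1 - α) := Real.Gamma_pos_of_pos (by linarith)
  -- nonnegativity
  have claim1 : ∀ k : ℕ, 2 ≤ k → 0 ≤ p k := by
    intro k hk
    rw [hp k hk]
    have hk2 : (2 : ℝ) ≤ (k : ℝ) := by exact_mod_cast hk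
    have h1 : 0 < Real.Gamma ((k : ℝ) - 1 - α) :=
      Real.Gamma_pos_of_pos (by linarith)
    have h2 : 0 < Real.Gamma ((k : ℝ) + 1) :=
      Real.Gamma_pos_of_pos (by linarith)
    positivity
  -- p (k+2) = bc (1+α) (k+2) / α
  have p_eq : ∀ k : ℕ, p (k + 2) = bc (1 + α) (k + 2) / α := by
    intro k
    rw [hp (k + 2) (by omega)]
    have e1 : ((k + 2 : ℕ) : ℝ) - 1 - α = (k : ℝ) + 1 - α := by push_cast; ring
    have e2 : ((k + 2 : ℕ) : ℝ) + 1 = ((k + 2 : ℕ) : ℝ) + 1 := rfl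
    rw [e1, Gprod hα1 k]
    have e3 : Real.Gamma (((k + 2 : ℕ) : ℝ) + 1) = (Nat.factorial (k + 2) : ℝ) :=
      Real.Gamma_nat_eq_factorial (k + 2)
    rw [e3, bc_eval]
    have hfac : (Nat.factorial (k + 2) : ℝ) ≠ 0 := by positivity
    field_simp
  -- partial sums
  have partial_sum : ∀ n : ℕ,
      ∑ i ∈ Finset.range n, bc (1 + α) (i + 2) = bc α (n + 1) + α := by
    intro n
    have h := bc_partial (1 + α) (n + 1)
    rw [show (1 + α) - 1 = α by ring] at h
    rw [Finset.sum_range_succ' (fun k => bc (1 + α) k) (n + 1),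
      Finset.sum_range_succ' (fun k => bc (1 + α) (k + 1)) n] at h
    simp only [bc_zero, bc_one] at h
    have e : ∑ k ∈ Finset.range n, bc (1 + α) (k + 1 + 1)
        = ∑ i ∈ Finset.range n, bc (1 + α) (i + 2) :=
      Finset.sum_congr rfl (fun k _ => by norm_num)
    rw [e] at h
    norm_num [bc_one] at h
    linarith [h]
  -- claim 2
  have hnonneg2 : ∀ i : ℕ, 0 ≤ p (i + 2) := fun i => claim1 (i + 2) (by omega)
  have claim2 : HasSum (fun k : ℕ => p (k + 2)) 1 := by
    rw [hasSum_iff_tendsto_nat_of_nonneg hnonneg2 1]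
    have heq : ∀ n : ℕ, ∑ i ∈ Finset.range n, p (i + 2) = 1 + bc α (n + 1) / α := by
      intro n
      have : ∑ i ∈ Finset.range n, p (i + 2)
          = ∑ i ∈ Finset.range n, bc (1 + α) (i + 2) / α := by
        apply Finset.sum_congr rfl; intro i _; exact p_eq i
      rw [this, ← Finset.sum_div, partial_sum n]
      field_simp
      ring
    simp only [heq]
    have h0 : Tendsto (fun n : ℕ => bc α (n + 1) / α) atTop (nhds 0) := by
      apply squeeze_zero_norm (fun n => ?_) tendsto_one_div_add_atTop_nhds_zero_nat
      rw [Real.norm_eq_abs, abs_div, abs_of_pos hα0]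
      have hb := bc_alpha_abs hα0 hα1 n
      calc |bc α (n + 1)| / α ≤ (α / ((n : ℝ) + 1)) / α := by gcongr
        _ = 1 / ((n : ℝ) + 1) := by field_simp
    have := h0.const_add 1
    simpa using this
  refine ⟨claim1, claim2.tsum_eq, ?_⟩
  -- claim 3
  intro s hs0 hs1
  rcases eq_or_lt_of_le hs1 with heq1 | hlt1
  · subst heq1
    simp only [one_pow, mul_one, sub_self, zero_mul, mul_zero, add_zero]
    rw [claim2.tsum_eq]
  · have hβ1 : 1 < 1 + α := by linarith
    have hβ2 : 1 + α < 2 := by linarith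
    have habs : |s| < 1 := by rw [abs_of_nonneg hs0]; exact hlt1
    have hsum := summable_S1 hβ1 hβ2 habs
    have hbin := tsum_binomial hβ1 hβ2 hs0 hlt1
    have hshift := Summable.sum_add_tsum_nat_add (f := fun k : ℕ => bc (1 + α) k * s ^ k) 2 hsum
    rw [hbin] at hshift
    have hsum01 : ∑ i ∈ Finset.range 2, bc (1 + α) i * s ^ i = 1 - (1 + α) * s := by
      rw [Finset.sum_range_succ, Finset.sum_range_one, bc_zero, bc_one]
      ring
    rw [hsum01] at hshift
    have hLHS : ∑' k : ℕ, p (k + 2) * s ^ (k + 2)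
        = (∑' k : ℕ, bc (1 + α) (k + 2) * s ^ (k + 2)) / α := by
      rw [← tsum_div_const]
      apply tsum_congr
      intro k
      rw [p_eq k]
      ring
    rw [hLHS]
    have : (∑' k : ℕ, bc (1 + α) (k + 2) * s ^ (k + 2)) = (1 - s) ^ (1 + α) - (1 - (1 + α) * s) := by
      linarith [hshift]
    rw [this]
    have hsplit : (1 - s) ^ (1 + α : ℝ) = (1 - s) ^ (α : ℝ) * (1 - s) := by
      have h1s : (0:ℝ) < 1 - s := by linarith
      rw [show (1 + α : ℝ) = α + 1 by ring, Real.rpow_add h1s, Real.rpow_one]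
    rw [hsplit]
    field_simp
    ring
end

section
/- If 0 ≤ α₁ ≤ α₂ ≤ 1, then the offspring distribution ν_{α₁} stochastically dominates ν_{α₂}: P(ν_{α₂} > k) ≤ P(ν_{α₁} > k) for all integers k, where P(ν_α = k) = (1+α)Γ(k-1-α)/(Γ(1-α)Γ(k+1)) for 0 ≤ α < 1 and k ≥ 2, and P(ν_1 = 2) = 1. -/
open Real

/-- Offspring law of the limit reduced process: for `0 ≤ α < 1`,
`P(ν_α = k) = (1+α)Γ(k-1-α)/(Γ(1-α)Γ(k+1))` for `k ≥ 2`; for `α = 1` the point mass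
at `2`. -/
noncomputable def pnu (α : ℝ) (k : ℕ) : ℝ :=
  if α = 1 then (if k = 2 then 1 else 0)
  else if 2 ≤ k then
    (1 + α) * Real.Gamma ((k : ℝ) - 1 - α) / (Real.Gamma (1 - α) * Real.Gamma ((k : ℝ) + 1))
  else 0

noncomputable def Tl (α : ℝ) (n : ℕ) : ℝ :=
  (∏ j ∈ Finset.range n, ((j : ℝ) + 1 - α)) / ((n + 1).factorial : ℝ)

lemma Tl_nonneg {α : ℝ} (hα : α ≤ 1) (n : ℕ) : 0 ≤ Tl α n := by
  apply div_nonneg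
  · exact Finset.prod_nonneg fun j _ => by
      have : (0 : ℝ) ≤ (j : ℝ) := Nat.cast_nonneg j
      linarith
  · positivity

lemma Tl_le {α : ℝ} (h0 : 0 ≤ α) (h1 : α ≤ 1) (n : ℕ) : Tl α n ≤ 1 / ((n : ℝ) + 1) := by
  have hprodnn : (0 : ℝ) ≤ ∏ j ∈ Finset.range n, ((j : ℝ) + 1 - α) :=
    Finset.prod_nonneg fun j _ => by
      have : (0 : ℝ) ≤ (j : ℝ) := Nat.cast_nonneg j
      linarith
  have hfac : (∏ j ∈ Finset.range n, ((j : ℝ) + 1 - α)) ≤ (n.factorial : ℝ) := by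
    calc (∏ j ∈ Finset.range n, ((j : ℝ) + 1 - α))
        ≤ ∏ j ∈ Finset.range n, ((j : ℝ) + 1) := by
          apply Finset.prod_le_prod
          · intro j _
            have : (0 : ℝ) ≤ (j : ℝ) := Nat.cast_nonneg j
            linarith
          · intro j _; linarith
      _ = (n.factorial : ℝ) := by
          rw [← Finset.prod_range_add_one_eq_factorial]
          push_cast
          rfl
  have hfacpos : (0 : ℝ) < ((n + 1).factorial : ℝ) := by positivity
  rw [Tl, div_le_div_iff₀ hfacpos (by positivity)]
  have hfe : ((n + 1).factorial : ℝ) = ((n : ℝ) + 1) * (n.factorial : ℝ) := by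
    rw [Nat.factorial_succ]; push_cast; ring
  rw [hfe]
  have hn1 : (0 : ℝ) < (n : ℝ) + 1 := by positivity
  nlinarith

lemma gamma_prod {α : ℝ} (hα : α < 1) (n : ℕ) :
    Real.Gamma ((n : ℝ) + 1 - α) = Real.Gamma (1 - α) * ∏ j ∈ Finset.range n, ((j : ℝ) + 1 - α) := by
  induction n with
  | zero => simp
  | succ n ih =>
    have hne : ((n : ℝ) + 1 - α) ≠ 0 := by
      have : (0 : ℝ) ≤ (n : ℝ) := Nat.cast_nonneg n
      intro h; nlinarith
    have h1 : ((n + 1 : ℕ) : ℝ) + 1 - α = ((n : ℝ) + 1 - α) + 1 := by push_cast; ring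
    rw [h1, Real.Gamma_add_one hne, ih, Finset.prod_range_succ]
    ring

lemma pnu_nonneg {α : ℝ} (h0 : 0 ≤ α) (h1 : α ≤ 1) (k : ℕ) : 0 ≤ pnu α k := by
  rw [pnu]
  split_ifs with hα hk hk'
  · norm_num
  · norm_num
  · have hlt : α < 1 := lt_of_le_of_ne h1 hα
    have hk2 : (2 : ℝ) ≤ (k : ℝ) := by exact_mod_cast hk'
    have hG1 : 0 < Real.Gamma ((k : ℝ) - 1 - α) := Real.Gamma_pos_of_pos (by linarith)
    have hG2 : 0 < Real.Gamma (1 - α) := Real.Gamma_pos_of_pos (by linarith)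
    have hG3 : 0 < Real.Gamma ((k : ℝ) + 1) := Real.Gamma_pos_of_pos (by linarith)
    exact div_nonneg (mul_nonneg (by linarith) hG1.le) (mul_nonneg hG2.le hG3.le)
  · norm_num

lemma pnu_step {α : ℝ} (h1 : α < 1) (n : ℕ) :
    pnu α (n + 2) = Tl α n - Tl α (n + 1) := by
  have hαne : α ≠ 1 := ne_of_lt h1
  have h2 : (2 : ℕ) ≤ n + 2 := by omega
  rw [pnu, if_neg hαne, if_pos h2]
  have harg : ((n + 2 : ℕ) : ℝ) - 1 - α = (n : ℝ) + 1 - α := by push_cast; ring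
  have hGfac : Real.Gamma (((n + 2 : ℕ) : ℝ) + 1) = ((n + 2).factorial : ℝ) := by
    exact_mod_cast Real.Gamma_nat_eq_factorial (n + 2)
  rw [harg, hGfac, gamma_prod h1 n, Tl, Tl, Finset.prod_range_succ]
  have hGpos : (0 : ℝ) < Real.Gamma (1 - α) := Real.Gamma_pos_of_pos (by linarith)
  have hf2 : ((n + 2).factorial : ℝ) = ((n : ℝ) + 2) * ((n + 1).factorial : ℝ) := by
    rw [show n + 2 = (n + 1) + 1 from rfl, Nat.factorial_succ]; push_cast; ring
  have hfpos : (0 : ℝ) < ((n + 1).factorial : ℝ) := by positivity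
  have hn2 : ((n : ℝ) + 2) ≠ 0 := by positivity
  rw [hf2]
  field_simp
  ring

lemma hasSum_tail {α : ℝ} (h0 : 0 ≤ α) (h1 : α ≤ 1) (k : ℕ) :
    HasSum (fun i : ℕ => pnu α (k + 2 + i)) (Tl α k) := by
  rcases lt_or_eq_of_le h1 with hlt | heq
  · have hterm : ∀ i : ℕ, pnu α (k + 2 + i) = Tl α (k + i) - Tl α (k + i + 1) := by
      intro i
      rw [show k + 2 + i = (k + i) + 2 by omega, pnu_step hlt]
    have hpart : ∀ n : ℕ, ∑ i ∈ Finset.range n, pnu α (k + 2 + i) = Tl α k - Tl α (k + n) := by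
      intro n
      calc ∑ i ∈ Finset.range n, pnu α (k + 2 + i)
          = ∑ i ∈ Finset.range n,
              ((fun m => Tl α (k + m)) i - (fun m => Tl α (k + m)) (i + 1)) := by
            apply Finset.sum_congr rfl
            intro i _
            rw [hterm i]
            rfl
        _ = Tl α (k + 0) - Tl α (k + n) := Finset.sum_range_sub' (fun m => Tl α (k + m)) n
        _ = Tl α k - Tl α (k + n) := by rw [Nat.add_zero]
    have hnonneg : ∀ i : ℕ, 0 ≤ pnu α (k + 2 + i) := fun i => pnu_nonneg h0 h1 _
    have hsummable : Summable (fun i : ℕ => pnu α (k + 2 + i)) := by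
      apply summable_of_sum_range_le (c := Tl α k) hnonneg
      intro n
      rw [hpart n]
      have := Tl_nonneg h1 (k + n)
      linarith
    rw [hsummable.hasSum_iff_tendsto_nat]
    have hT0 : Filter.Tendsto (fun n : ℕ => Tl α (k + n)) Filter.atTop (nhds 0) := by
      apply squeeze_zero (fun n => Tl_nonneg h1 (k + n)) (fun n => ?_)
          tendsto_one_div_add_atTop_nhds_zero_nat
      calc Tl α (k + n) ≤ 1 / (((k + n : ℕ) : ℝ) + 1) := Tl_le h0 h1 (k + n)
        _ ≤ 1 / ((n : ℝ) + 1) := by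
            apply one_div_le_one_div_of_le (by positivity)
            push_cast
            linarith [Nat.cast_nonneg (α := ℝ) k]
    have hlim := Filter.Tendsto.sub
      (tendsto_const_nhds (x := Tl α k) (f := Filter.atTop (α := ℕ))) hT0
    rw [sub_zero] at hlim
    refine hlim.congr ?_
    intro n
    rw [hpart n]
  · subst heq
    have hval : ∀ i : ℕ, pnu 1 (k + 2 + i) = if k + 2 + i = 2 then 1 else 0 := by
      intro i; rw [pnu, if_pos rfl]
    rcases Nat.eq_zero_or_pos k with hk | hk
    · subst hk
      have he : (fun i : ℕ => pnu 1 (0 + 2 + i)) = fun i : ℕ => if i = 0 then 1 else 0 := by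
        funext i
        rw [hval i]
        by_cases h : i = 0 <;> simp [h] <;> omega
      rw [he]
      have hTl : Tl 1 0 = 1 := by simp [Tl]
      rw [hTl]
      exact hasSum_ite_eq 0 1
    · have hz : (fun i : ℕ => pnu 1 (k + 2 + i)) = fun _ : ℕ => (0 : ℝ) := by
        funext i
        rw [hval i, if_neg (by omega)]
      have hTl : Tl 1 k = 0 := by
        rw [Tl]
        apply div_eq_zero_iff.mpr
        left
        apply Finset.prod_eq_zero (Finset.mem_range.mpr hk)
        norm_num
      rw [hz, hTl]
      exact hasSum_zero

lemma hasSum_tail' {α : ℝ} (h0 : 0 ≤ α) (h1 : α ≤ 1) (k : ℕ) :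
    HasSum (fun i : ℕ => pnu α (k + 1 + i)) (Tl α (k - 1)) := by
  cases k with
  | zero =>
    have h := hasSum_tail h0 h1 0
    have he : (fun n : ℕ => pnu α (0 + 1 + (n + 1))) = fun i : ℕ => pnu α (0 + 2 + i) := by
      funext n; congr 1; omega
    have h2 : HasSum (fun n : ℕ => pnu α (0 + 1 + (n + 1))) (Tl α 0) := by
      rw [he]; exact h
    have h3 := (hasSum_nat_add_iff (f := fun i : ℕ => pnu α (0 + 1 + i)) 1).mp h2
    have hp1 : pnu α (0 + 1 + 0) = 0 := by
      rw [pnu]; split_ifs <;> simp_all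
    simpa [hp1] using h3
  | succ m =>
    have h := hasSum_tail h0 h1 m
    have he : (fun i : ℕ => pnu α (m + 1 + 1 + i)) = fun i : ℕ => pnu α (m + 2 + i) := by
      funext i; congr 1
    show HasSum (fun i : ℕ => pnu α (m + 1 + 1 + i)) (Tl α m)
    rw [he]; exact h

/-- Stochastic domination: if `0 ≤ α₁ ≤ α₂ ≤ 1` then `P(ν_{α₂} > k) ≤ P(ν_{α₁} > k)`
for every `k`. -/
theorem stmt4 (α₁ α₂ : ℝ) (h0 : 0 ≤ α₁) (h12 : α₁ ≤ α₂) (h2 : α₂ ≤ 1) (k : ℕ) :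
    (∑' i : ℕ, pnu α₂ (k + 1 + i)) ≤ ∑' i : ℕ, pnu α₁ (k + 1 + i) := by
  have h01 : α₁ ≤ 1 := le_trans h12 h2
  have h02 : 0 ≤ α₂ := le_trans h0 h12
  rw [(hasSum_tail' h02 h2 k).tsum_eq, (hasSum_tail' h0 h01 k).tsum_eq]
  rw [Tl, Tl]
  have hp : ∏ j ∈ Finset.range (k - 1), ((j : ℝ) + 1 - α₂)
      ≤ ∏ j ∈ Finset.range (k - 1), ((j : ℝ) + 1 - α₁) := by
    apply Finset.prod_le_prod
    · intro j _
      have : (0 : ℝ) ≤ (j : ℝ) := Nat.cast_nonneg j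
      linarith
    · intro j _; linarith
  have hfpos : (0 : ℝ) < ((k - 1 + 1).factorial : ℝ) := by positivity
  exact div_le_div_of_nonneg_right hp hfpos.le
end
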